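/- With V, mᵢ, θᵢ, Θ, φᵢ as in the context, for all k, v ∈ V the pointwise recovery error estimate |⟪k, v⟫ − Σᵢ mᵢ(v) ⟪k, φᵢ⟫| ≤ σ(k) ‖v‖ holds, where σ(k)² := ‖k‖² − Σᵢⱼ (Θ⁻¹)ᵢⱼ ⟪k, θᵢ⟫ ⟪k, θⱼ⟫ (which is nonnegative). -/

import Mathlib

open RealInnerProductSpace Matrix

/-- Pointwise recovery error estimate: for all `k, v ∈ V`,
`|⟪k, v⟫ − Σᵢ mᵢ(v) ⟪k, φᵢ⟫| ≤ σ(k) ‖v‖` where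
`σ(k)² = ‖k‖² − Σᵢⱼ (Θ⁻¹)ᵢⱼ ⟪k, θᵢ⟫ ⟪k, θⱼ⟫` is nonnegative. -/
theorem pointwise_recovery_error
    {V : Type*} [NormedAddCommGroup V] [InnerProductSpace ℝ V] [CompleteSpace V]
    {N : ℕ} (m : Fin N → (V →L[ℝ] ℝ)) (hm : LinearIndependent ℝ m)
    (θ : Fin N → V) (hθ : ∀ i v, ⟪θ i, v⟫ = m i v)
    (Θ : Matrix (Fin N) (Fin N) ℝ) (hΘ : ∀ i j, Θ i j = ⟪θ i, θ j⟫)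
    (hΘpd : Θ.PosDef)
    (φ : Fin N → V) (hφ : ∀ i, φ i = ∑ j, Θ⁻¹ i j • θ j) :
    ∀ k v : V,
      0 ≤ ‖k‖ ^ 2 - ∑ i, ∑ j, Θ⁻¹ i j * ⟪k, θ i⟫ * ⟪k, θ j⟫ ∧
      |⟪k, v⟫ - ∑ i, m i v * ⟪k, φ i⟫|
        ≤ Real.sqrt (‖k‖ ^ 2 - ∑ i, ∑ j, Θ⁻¹ i j * ⟪k, θ i⟫ * ⟪k, θ j⟫) * ‖v‖ := by
  intro k v
  have hdet : IsUnit (Matrix.det Θ) := isUnit_iff_ne_zero.mpr hΘpd.det_pos.ne'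
  have hΘsymm : Θᵀ = Θ := by
    ext i j; simp [Matrix.transpose_apply, hΘ, real_inner_comm]
  have hinvsymm : ∀ i j, Θ⁻¹ i j = Θ⁻¹ j i := by
    intro i j
    have := Matrix.transpose_nonsing_inv Θ
    rw [hΘsymm] at this
    calc Θ⁻¹ i j = (Θ⁻¹)ᵀ j i := rfl
      _ = Θ⁻¹ j i := by rw [this]
  have hmul : Θ⁻¹ * Θ = 1 := Matrix.nonsing_inv_mul Θ hdet
  set c : Fin N → ℝ := fun i => ∑ j, Θ⁻¹ i j * ⟪k, θ j⟫ with hc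
  set w : V := k - ∑ i, c i • θ i with hw
  -- orthogonality of w to each θ l
  have horth : ∀ l, ⟪w, θ l⟫ = 0 := by
    intro l
    have h1 : ⟪w, θ l⟫ = ⟪k, θ l⟫ - ∑ i, c i * ⟪θ i, θ l⟫ := by
      simp [hw, inner_sub_left, sum_inner, inner_smul_left]
    have h2 : ∑ i, c i * ⟪θ i, θ l⟫ = ⟪k, θ l⟫ := by
      have : ∑ i, c i * ⟪θ i, θ l⟫
          = ∑ j, ⟪k, θ j⟫ * ∑ i, Θ⁻¹ j i * Θ i l := by
        simp only [hc, Finset.sum_mul, Finset.mul_sum]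
        rw [Finset.sum_comm]
        apply Finset.sum_congr rfl; intro j _
        apply Finset.sum_congr rfl; intro i _
        rw [hinvsymm i j, hΘ]; ring
      rw [this]
      have hone : ∀ j, ∑ i, Θ⁻¹ j i * Θ i l = (1 : Matrix (Fin N) (Fin N) ℝ) j l := by
        intro j; rw [← hmul]; rfl
      simp only [hone]
      simp [Matrix.one_apply]
    rw [h1, h2, sub_self]
  -- the error equals ⟪w, v⟫
  have herr : ⟪k, v⟫ - ∑ i, m i v * ⟪k, φ i⟫ = ⟪w, v⟫ := by
    have h1 : ⟪w, v⟫ = ⟪k, v⟫ - ∑ i, c i * ⟪θ i, v⟫ := by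
      simp [hw, inner_sub_left, sum_inner, inner_smul_left]
    have h2 : ∀ i, m i v * ⟪k, φ i⟫ = (∑ j, Θ⁻¹ i j * ⟪k, θ j⟫) * ⟪θ i, v⟫ := by
      intro i
      rw [hφ i, ← hθ i v]
      simp only [inner_sum, inner_smul_right]
      ring
    rw [h1]
    congr 1
    exact Finset.sum_congr rfl fun i _ => h2 i
  -- σ² = ‖w‖²
  have hsigma : ‖k‖ ^ 2 - ∑ i, ∑ j, Θ⁻¹ i j * ⟪k, θ i⟫ * ⟪k, θ j⟫ = ‖w‖ ^ 2 := by
    have h1 : (‖w‖ : ℝ) ^ 2 = ⟪w, w⟫ := (real_inner_self_eq_norm_sq w).symm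
    have h2 : ⟪w, w⟫ = ⟪w, k⟫ := by
      have : ⟪w, w⟫ = ⟪w, k⟫ - ∑ i, c i * ⟪w, θ i⟫ := by
        nth_rewrite 2 [hw]
        simp [inner_sub_right, inner_sum, inner_smul_right]
      rw [this]; simp [horth]
    have h3 : ⟪w, k⟫ = ‖k‖ ^ 2 - ∑ i, c i * ⟪θ i, k⟫ := by
      rw [hw]
      simp [inner_sub_left, sum_inner, inner_smul_left, real_inner_self_eq_norm_sq]
    rw [h1, h2, h3]
    congr 1
    apply Finset.sum_congr rfl; intro i _
    rw [hc]
    simp only [Finset.sum_mul]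
    apply Finset.sum_congr rfl; intro j _
    rw [real_inner_comm (θ i) k]; ring
  constructor
  · rw [hsigma]; positivity
  · rw [herr, hsigma, Real.sqrt_sq (norm_nonneg w)]
    exact abs_real_inner_le_norm w v
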